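/- A nonempty closed subset Z of Spc(K) is irreducible if and only if P := {a ∈ K : U(a) ∩ Z ≠ ∅} is a prime thick tensor-ideal; in that case Z is the closure of {P}, so every nonempty irreducible closed subset of Spc(K) has a unique generic point. -/

import Mathlib

open CategoryTheory CategoryTheory.Limits CategoryTheory.Pretriangulated
open CategoryTheory.MonoidalCategory
open ZeroObject

universe v u

variable (C : Type u) [Category.{v} C] [Preadditive C] [HasZeroObject C]
  [HasShift C ℤ] [∀ n : ℤ, (shiftFunctor C n).Additive] [Pretriangulated C]
  [HasBinaryBiproducts C] [MonoidalCategory C] [SymmetricCategory C]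

/-- A thick tensor-ideal: a class of objects closed under isomorphism, containing 0,
satisfying two-out-of-three for distinguished triangles, closed under direct summands,
and closed under tensoring (on either side) with arbitrary objects. -/
structure IsThickTensorIdeal (J : Set C) : Prop where
  iso_closed : ∀ {a b : C}, (a ≅ b) → a ∈ J → b ∈ J
  zero_mem : (0 : C) ∈ J
  tri₃ : ∀ T : Triangle C, T ∈ (distTriang C) → T.obj₁ ∈ J → T.obj₂ ∈ J → T.obj₃ ∈ J
  tri₂ : ∀ T : Triangle C, T ∈ (distTriang C) → T.obj₁ ∈ J → T.obj₃ ∈ J → T.obj₂ ∈ J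
  tri₁ : ∀ T : Triangle C, T ∈ (distTriang C) → T.obj₂ ∈ J → T.obj₃ ∈ J → T.obj₁ ∈ J
  thick : ∀ a b : C, (a ⊞ b) ∈ J → a ∈ J ∧ b ∈ J
  ideal_right : ∀ a b : C, a ∈ J → a ⊗ b ∈ J
  ideal_left : ∀ a b : C, a ∈ J → b ⊗ a ∈ J

/-- A prime thick tensor-ideal. -/
structure IsPrimeIdeal (P : Set C) extends IsThickTensorIdeal C P : Prop where
  proper : P ≠ Set.univ
  prime : ∀ a b : C, a ⊗ b ∈ P → a ∈ P ∨ b ∈ P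

/-- The Balmer spectrum: the set of prime thick tensor-ideals. -/
def SpcK : Type _ := {P : Set C // IsPrimeIdeal C P}

/-- The support of an object. -/
def suppK (a : C) : Set (SpcK C) := {P | a ∉ P.1}

/-- The Zariski topology, generated by the basic open sets U(a) = {P | a ∈ P}. -/
instance : TopologicalSpace (SpcK C) :=
  TopologicalSpace.generateFrom {U | ∃ a : C, U = {P : SpcK C | a ∈ P.1}}

/-- A tensor-multiplicative collection of objects. -/
def IsMult (S : Set C) : Prop := 𝟙_ C ∈ S ∧ ∀ a ∈ S, ∀ b ∈ S, a ⊗ b ∈ S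

/-- The smallest thick tensor-ideal containing `E`. -/
def genIdeal (E : Set C) : Set C := ⋂₀ {J : Set C | IsThickTensorIdeal C J ∧ E ⊆ J}

/-- The n-fold tensor power of an object (with `tpow a 1 = a`). -/
def tpow (a : C) : ℕ → C
  | 0 => 𝟙_ C
  | 1 => a
  | n+2 => tpow a (n+1) ⊗ a

section Aux
variable {C}

lemma biprod_mem {J : Set C} (hJ : IsThickTensorIdeal C J) {a b : C}
    (ha : a ∈ J) (hb : b ∈ J) : (a ⊞ b) ∈ J :=
  hJ.tri₂ _ (binaryBiproductTriangle_distinguished a b) ha hb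

lemma unit_not_mem {P : Set C} (hP : IsPrimeIdeal C P) : 𝟙_ C ∉ P := by
  intro h
  apply hP.proper
  ext b
  simp only [Set.mem_univ, iff_true]
  exact hP.iso_closed (λ_ b) (hP.ideal_right _ b h)

lemma isOpen_basic (a : C) : IsOpen {P : SpcK C | a ∈ P.1} :=
  TopologicalSpace.GenerateOpen.basic _ ⟨a, rfl⟩

lemma exists_basic {O : Set (SpcK C)} (hO : IsOpen O) {P : SpcK C} (hP : P ∈ O) :
    ∃ a : C, a ∈ P.1 ∧ {Q : SpcK C | a ∈ Q.1} ⊆ O := by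
  revert hP
  induction hO with
  | basic U hU =>
    obtain ⟨a, rfl⟩ := hU
    exact fun hP => ⟨a, hP, subset_rfl⟩
  | univ => exact fun _ => ⟨0, P.2.zero_mem, by simp⟩
  | inter O₁ O₂ h₁ h₂ ih₁ ih₂ =>
    intro hP
    obtain ⟨a, ha, hsub⟩ := ih₁ hP.1
    obtain ⟨b, hb, hsub'⟩ := ih₂ hP.2
    refine ⟨a ⊞ b, biprod_mem P.2.toIsThickTensorIdeal ha hb, fun Q hQ => ?_⟩
    obtain ⟨hQa, hQb⟩ := Q.2.thick a b hQ
    exact ⟨hsub hQa, hsub' hQb⟩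
  | sUnion S hS ih =>
    intro hP
    obtain ⟨O', hO', hPO⟩ := hP
    obtain ⟨a, ha, hsub⟩ := ih O' hO' hPO
    exact ⟨a, ha, hsub.trans (Set.subset_sUnion_of_mem hO')⟩

lemma mem_closure_singleton {P Q : SpcK C} :
    Q ∈ closure ({P} : Set (SpcK C)) ↔ Q.1 ⊆ P.1 := by
  constructor
  · intro h a ha
    obtain ⟨R, hR1, hR2⟩ := mem_closure_iff.mp h _ (isOpen_basic a) ha
    rw [Set.mem_singleton_iff] at hR2
    subst hR2
    exact hR1
  · intro hsub
    rw [mem_closure_iff]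
    intro O hO hQ
    obtain ⟨a, ha, hsubO⟩ := exists_basic hO hQ
    exact ⟨P, hsubO (hsub ha), rfl⟩

end Aux

/-- Proposition 2.18: a nonempty closed subset Z is irreducible iff
P = {a | U(a) ∩ Z ≠ ∅} is a prime, in which case Z is the closure of {P};
hence irreducible closed subsets have unique generic points. -/
theorem irreducible_closed_iff_prime (Z : Set (SpcK C)) (hZ : IsClosed Z)
    (hne : Z.Nonempty) :
    (IsIrreducible Z ↔
      IsPrimeIdeal C {a : C | ({P : SpcK C | a ∈ P.1} ∩ Z).Nonempty}) ∧
    (∀ h : IsPrimeIdeal C {a : C | ({P : SpcK C | a ∈ P.1} ∩ Z).Nonempty},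
      Z = closure ({(⟨_, h⟩ : SpcK C)} : Set (SpcK C))) ∧
    (IsIrreducible Z → ∃! P : SpcK C, closure ({P} : Set (SpcK C)) = Z) := by
  classical
  set S : Set C := {a : C | ({P : SpcK C | a ∈ P.1} ∩ Z).Nonempty} with hS
  have key : IsIrreducible Z → IsPrimeIdeal C S := by
    rintro ⟨hne', hpre⟩
    have pair : ∀ a b : C, a ∈ S → b ∈ S →
        ∃ Q : SpcK C, Q ∈ Z ∧ a ∈ Q.1 ∧ b ∈ Q.1 := by
      rintro a b ⟨Qa, haQ, hQaZ⟩ ⟨Qb, hbQ, hQbZ⟩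
      obtain ⟨Q, hQZ, hQa, hQb⟩ := hpre _ _ (isOpen_basic a) (isOpen_basic b)
        ⟨Qa, hQaZ, haQ⟩ ⟨Qb, hQbZ, hbQ⟩
      exact ⟨Q, hQZ, hQa, hQb⟩
    refine { iso_closed := ?_, zero_mem := ?_, tri₃ := ?_, tri₂ := ?_, tri₁ := ?_,
             thick := ?_, ideal_right := ?_, ideal_left := ?_, proper := ?_, prime := ?_ }
    · rintro a b e ⟨Q, haQ, hQZ⟩
      exact ⟨Q, Q.2.iso_closed e haQ, hQZ⟩
    · obtain ⟨Q, hQZ⟩ := hne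
      exact ⟨Q, Q.2.zero_mem, hQZ⟩
    · intro T hT h1 h2
      obtain ⟨Q, hQZ, hQ1, hQ2⟩ := pair _ _ h1 h2
      exact ⟨Q, Q.2.tri₃ T hT hQ1 hQ2, hQZ⟩
    · intro T hT h1 h2
      obtain ⟨Q, hQZ, hQ1, hQ2⟩ := pair _ _ h1 h2
      exact ⟨Q, Q.2.tri₂ T hT hQ1 hQ2, hQZ⟩
    · intro T hT h1 h2
      obtain ⟨Q, hQZ, hQ1, hQ2⟩ := pair _ _ h1 h2
      exact ⟨Q, Q.2.tri₁ T hT hQ1 hQ2, hQZ⟩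
    · rintro a b ⟨Q, hQ, hQZ⟩
      obtain ⟨ha, hb⟩ := Q.2.thick a b hQ
      exact ⟨⟨Q, ha, hQZ⟩, ⟨Q, hb, hQZ⟩⟩
    · rintro a b ⟨Q, haQ, hQZ⟩
      exact ⟨Q, Q.2.ideal_right a b haQ, hQZ⟩
    · rintro a b ⟨Q, haQ, hQZ⟩
      exact ⟨Q, Q.2.ideal_left a b haQ, hQZ⟩
    · intro h
      have h1 : 𝟙_ C ∈ S := h ▸ Set.mem_univ _
      obtain ⟨Q, hQ, hQZ⟩ := h1
      exact unit_not_mem Q.2 hQ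
    · rintro a b ⟨Q, hab, hQZ⟩
      rcases Q.2.prime a b hab with h | h
      · exact Or.inl ⟨Q, h, hQZ⟩
      · exact Or.inr ⟨Q, h, hQZ⟩
  have part2 : ∀ h : IsPrimeIdeal C S, Z = closure ({(⟨S, h⟩ : SpcK C)} : Set (SpcK C)) := by
    intro h
    have hmem : (⟨S, h⟩ : SpcK C) ∈ Z := by
      by_contra hc
      obtain ⟨a, ha, hsub⟩ := exists_basic hZ.isOpen_compl hc
      obtain ⟨Q, haQ, hQZ⟩ := ha
      exact hsub haQ hQZ
    apply Set.Subset.antisymm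
    · intro Q hQ
      exact mem_closure_singleton.mpr (fun a haQ => ⟨Q, haQ, hQ⟩)
    · calc closure ({(⟨S, h⟩ : SpcK C)} : Set (SpcK C))
          ⊆ closure Z := closure_mono (Set.singleton_subset_iff.mpr hmem)
        _ = Z := hZ.closure_eq
  refine ⟨⟨key, fun h => ?_⟩, part2, fun hirr => ?_⟩
  · rw [part2 h]
    exact isIrreducible_singleton.closure
  · have h := key hirr
    refine ⟨⟨S, h⟩, (part2 h).symm, ?_⟩
    intro Q hQ
    have h1 : Q.1 ⊆ (⟨S, h⟩ : SpcK C).1 := by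
      apply (mem_closure_singleton (P := (⟨S, h⟩ : SpcK C)) (Q := Q)).mp
      show Q ∈ closure ({(⟨S, h⟩ : SpcK C)} : Set (SpcK C))
      rw [← part2 h, ← hQ]
      exact subset_closure rfl
    have h2 : (⟨S, h⟩ : SpcK C).1 ⊆ Q.1 := by
      apply (mem_closure_singleton (P := Q) (Q := (⟨S, h⟩ : SpcK C))).mp
      rw [hQ, part2 h]
      exact subset_closure rfl
    exact Subtype.ext (Set.Subset.antisymm h1 h2)
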